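/- Let n ≥ 2 and let x = (x_2,…,x_{2n−1}) be nonzero complex numbers such that T_k(x) ≠ 0 for 1 ≤ k ≤ n−1. Define y(x) = (y_1,…,y_{2n−2}) by y_1 = T_1(x)^{−1}, y_k = x_k·T_k(x)^{−1} for 2 ≤ k ≤ n−1, y_n = 1/x_n, and y_{n+l} = (x_{n+l}/x_n)·T_l(x) for 1 ≤ l ≤ n−2. Then for every pair 1 ≤ i < j ≤ n+1 one has Y_{ij}(y(x)) = (1/x_n)·X_{ij}(x). -/

import Mathlib

noncomputable section

/-- `Tf n x k = ∑_{j=k+1}^{n} x_j / x_{n+j-1}` (so `Tf n x n = 0`). -/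
def Tf (n : ℕ) (x : ℕ → ℂ) (k : ℕ) : ℂ :=
  ∑ j ∈ Finset.Icc (k + 1) n, x j / x (n + j - 1)

/-- The coefficients `X_{ij}(x)` for `1 ≤ i < j ≤ n+1`. -/
def Xc (n : ℕ) (x : ℕ → ℂ) (i j : ℕ) : ℂ :=
  if j = n + 1 then (if i = n then 1 else x (n + i))
  else if j = n then x (i + 1) + x (n + i) * ∑ m ∈ Finset.Icc (i + 2) n, x m / x (n + m - 1)
  else x (n + j) * (x (i + 1) + x (n + i) * ∑ m ∈ Finset.Icc (i + 2) j, x m / x (n + m - 1))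

/-- The coefficients `Y_{ij}(y)` for `1 ≤ i < j ≤ n+1`. -/
def Yc (n : ℕ) (y : ℕ → ℂ) (i j : ℕ) : ℂ :=
  if j = n + 1 then
    (if i = n then y n
     else if i = n - 1 then y 1 + y n * ∑ m ∈ Finset.Icc 2 (n - 1), y m / y (n + m - 1)
     else y (n + i) * (y 1 + y n * ∑ m ∈ Finset.Icc 2 i, y m / y (n + m - 1)))
  else if j = n then (if i = n - 1 then 1 else y (n + i))
  else if j = n - 1 then
    y (i + 1) + y (n + i) * ∑ m ∈ Finset.Icc (i + 2) (n - 1), y m / y (n + m - 1)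
  else y (n + j) * (y (i + 1) + y (n + i) * ∑ m ∈ Finset.Icc (i + 2) j, y m / y (n + m - 1))

/-- The map `x ↦ y(x)`:
`y_1 = T_1(x)⁻¹`, `y_k = x_k·T_k(x)⁻¹` for `2 ≤ k ≤ n-1`, `y_n = x_n⁻¹`,
`y_{n+l} = (x_{n+l}/x_n)·T_l(x)` for `1 ≤ l ≤ n-2`. -/
def yOf (n : ℕ) (x : ℕ → ℂ) (k : ℕ) : ℂ :=
  if k = 1 then (Tf n x 1)⁻¹
  else if k ≤ n - 1 then x k * (Tf n x k)⁻¹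
  else if k = n then (x n)⁻¹
  else (x k / x n) * Tf n x (k - n)

lemma Tf_step (n : ℕ) (x : ℕ → ℂ) (k : ℕ) (hk : k + 1 ≤ n) :
    Tf n x k = x (k+1) / x (n+k) + Tf n x (k+1) := by
  unfold Tf
  rw [show Finset.Icc (k+1) n = insert (k+1) (Finset.Icc (k+2) n) by
    ext m; simp [Finset.mem_Icc]; omega]
  rw [Finset.sum_insert (by simp [Finset.mem_Icc]), show n+(k+1)-1 = n+k from by omega]

lemma Tf_last (n : ℕ) (hn : 1 ≤ n) (x : ℕ → ℂ) :
    Tf n x (n-1) = x n / x (2*n - 1) := by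
  unfold Tf
  rw [show n - 1 + 1 = n by omega, Finset.Icc_self, Finset.sum_singleton]
  congr 2
  omega

lemma Tf_diff (n : ℕ) (x : ℕ → ℂ) {a b : ℕ} (hab : a ≤ b) (hb : b ≤ n) :
    ∑ m ∈ Finset.Icc (a+1) b, x m / x (n+m-1) = Tf n x a - Tf n x b := by
  have h := Finset.sum_Ioc_consecutive (fun m => x m / x (n+m-1)) hab hb
  unfold Tf
  rw [Finset.Icc_add_one_left_eq_Ioc, Finset.Icc_add_one_left_eq_Ioc, Finset.Icc_add_one_left_eq_Ioc, ← h]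
  ring

lemma yOf_one (n : ℕ) (x : ℕ → ℂ) : yOf n x 1 = (Tf n x 1)⁻¹ := by
  unfold yOf; rw [if_pos rfl]

lemma yOf_mid (n : ℕ) (x : ℕ → ℂ) {k : ℕ} (h2 : 2 ≤ k) (h : k ≤ n - 1) :
    yOf n x k = x k * (Tf n x k)⁻¹ := by
  unfold yOf; rw [if_neg (by omega), if_pos h]

lemma yOf_n (n : ℕ) (hn : 2 ≤ n) (x : ℕ → ℂ) : yOf n x n = (x n)⁻¹ := by
  unfold yOf; rw [if_neg (by omega), if_neg (by omega), if_pos rfl]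

lemma yOf_hi (n : ℕ) (hn : 2 ≤ n) (x : ℕ → ℂ) {l : ℕ} (hl : 1 ≤ l) :
    yOf n x (n + l) = (x (n + l) / x n) * Tf n x l := by
  unfold yOf
  rw [if_neg (by omega), if_neg (by omega), if_neg (by omega),
    show n + l - n = l from by omega]

lemma tele (n : ℕ) (hn : 2 ≤ n) (x : ℕ → ℂ)
    (hx : ∀ k, 2 ≤ k → k ≤ 2 * n - 1 → x k ≠ 0)
    (hT : ∀ k, 1 ≤ k → k ≤ n - 1 → Tf n x k ≠ 0) :
    ∀ a, 1 ≤ a → ∀ b, a ≤ b → b ≤ n - 1 →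
      ∑ m ∈ Finset.Icc (a+1) b, yOf n x m / yOf n x (n+m-1)
        = x n * ((Tf n x b)⁻¹ - (Tf n x a)⁻¹) := by
  intro a ha b hab
  induction b, hab using Nat.le_induction with
  | base =>
    intro _
    rw [Finset.Icc_eq_empty (by omega), Finset.sum_empty]
    ring
  | succ b hab ih =>
    intro hb
    have ihb := ih (by omega)
    rw [show Finset.Icc (a+1) (b+1) = insert (b+1) (Finset.Icc (a+1) b) by
        ext m; simp [Finset.mem_Icc]; omega,
      Finset.sum_insert (by simp [Finset.mem_Icc]), ihb]
    have e1 : yOf n x (b+1) = x (b+1) * (Tf n x (b+1))⁻¹ := yOf_mid n x (by omega) (by omega)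
    have e2 : yOf n x (n+(b+1)-1) = (x (n+b) / x n) * Tf n x b := by
      rw [show n+(b+1)-1 = n+b from by omega]
      exact yOf_hi n hn x (by omega)
    rw [e1, e2]
    have hxn : x n ≠ 0 := hx n (by omega) (by omega)
    have hxnb : x (n+b) ≠ 0 := hx _ (by omega) (by omega)
    have hTb : Tf n x b ≠ 0 := hT b (by omega) (by omega)
    have hTb1 : Tf n x (b+1) ≠ 0 := hT (b+1) (by omega) (by omega)
    have hTa : Tf n x a ≠ 0 := hT a (by omega) (by omega)
    have hstep : Tf n x b = x (b+1) / x (n+b) + Tf n x (b+1) := Tf_step n x b (by omega)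
    have hdiff2 : x (b+1) = x (n+b) * Tf n x b - x (n+b) * Tf n x (b+1) := by
      rw [hstep]; field_simp; ring
    have key : x (b+1) * (Tf n x (b+1))⁻¹ / ((x (n+b)/x n) * Tf n x b)
        = x n * ((Tf n x (b+1))⁻¹ - (Tf n x b)⁻¹) := by
      field_simp
      linear_combination hdiff2
    rw [key]
    ring

set_option maxHeartbeats 1600000 in
/-- for all `1 ≤ i < j ≤ n+1`, `Y_{ij}(y(x)) = (1/x_n)·X_{ij}(x)`. -/
theorem stmt0 (n : ℕ) (hn : 2 ≤ n) (x : ℕ → ℂ)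
    (hx : ∀ k, 2 ≤ k → k ≤ 2 * n - 1 → x k ≠ 0)
    (hT : ∀ k, 1 ≤ k → k ≤ n - 1 → Tf n x k ≠ 0) :
    ∀ i j, 1 ≤ i → i < j → j ≤ n + 1 →
      Yc n (yOf n x) i j = (1 / x n) * Xc n x i j := by
  intro i j hi hij hj
  have hxn : x n ≠ 0 := hx n hn (by omega)
  unfold Yc Xc
  split_ifs with h1 h2 h3 h4 h5 h6 <;> try omega
  -- Case j = n+1, i = n
  · rw [yOf_n n hn x, mul_one, one_div]
  -- Case j = n+1, i = n-1
  · have hs := tele n hn x hx hT 1 le_rfl (n-1) (by omega) le_rfl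
    norm_num at hs
    have hT1 : Tf n x 1 ≠ 0 := hT 1 le_rfl (by omega)
    have hx2 : x (2*n-1) ≠ 0 := hx _ (by omega) (by omega)
    rw [hs, yOf_one, yOf_n n hn x, h3, show n + (n-1) = 2*n-1 from by omega,
      Tf_last n (by omega) x]
    field_simp
    ring
  -- Case j = n+1, i ≤ n-2
  · have hs := tele n hn x hx hT 1 le_rfl i hi (by omega)
    norm_num at hs
    have hT1 : Tf n x 1 ≠ 0 := hT 1 le_rfl (by omega)
    have hTi : Tf n x i ≠ 0 := hT i hi (by omega)
    have hxni : x (n+i) ≠ 0 := hx _ (by omega) (by omega)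
    rw [hs, yOf_one, yOf_n n hn x, yOf_hi n hn x hi]
    field_simp
    ring
  -- Case j = n, i = n-1
  · rw [h5, Finset.Icc_eq_empty (by omega), Finset.sum_empty,
      show n-1+1 = n from by omega]
    field_simp
    ring
  -- Case j = n, i ≤ n-2
  · have hsum : ∑ m ∈ Finset.Icc (i+2) n, x m / x (n+m-1) = Tf n x (i+1) := rfl
    have hxni : x (n+i) ≠ 0 := hx _ (by omega) (by omega)
    rw [hsum, yOf_hi n hn x hi, Tf_step n x i (by omega)]
    field_simp
  -- Case j = n-1
  · have hs := tele n hn x hx hT (i+1) (by omega) (n-1) (by omega) le_rfl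
    have he : i+1+1 = i+2 := rfl
    rw [he] at hs
    have hsX := Tf_diff n x (show i+1 ≤ j from hij) (by omega)
    rw [he] at hsX
    have hT1 : Tf n x (i+1) ≠ 0 := hT (i+1) (by omega) (by omega)
    have hx2 : x (2*n-1) ≠ 0 := hx _ (by omega) (by omega)
    have hxni : x (n+i) ≠ 0 := hx _ (by omega) (by omega)
    rw [hs, hsX, yOf_mid n x (k := i+1) (by omega) (by omega), yOf_hi n hn x hi, h6,
      show n + (n-1) = 2*n-1 from by omega, Tf_last n (by omega) x,
      Tf_step n x i (by omega)]
    field_simp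
    ring
  -- Case j ≤ n-2
  · have hs := tele n hn x hx hT (i+1) (by omega) j hij (by omega)
    have he : i+1+1 = i+2 := rfl
    rw [he] at hs
    have hsX := Tf_diff n x (show i+1 ≤ j from hij) (show j ≤ n from by omega)
    rw [he] at hsX
    have hT1 : Tf n x (i+1) ≠ 0 := hT (i+1) (by omega) (by omega)
    have hTj : Tf n x j ≠ 0 := hT j (by omega) (by omega)
    have hxni : x (n+i) ≠ 0 := hx _ (by omega) (by omega)
    have hxnj : x (n+j) ≠ 0 := hx _ (by omega) (by omega)
    rw [hs, hsX, yOf_mid n x (k := i+1) (by omega) (by omega), yOf_hi n hn x hi,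
      yOf_hi n hn x (show 1 ≤ j from by omega), Tf_step n x i (by omega)]
    have key : ∀ a b c tn u v : ℂ, tn ≠ 0 → b ≠ 0 → u ≠ 0 → v ≠ 0 →
        c / tn * v * (a * u⁻¹ + b / tn * (a / b + u) * (tn * (v⁻¹ - u⁻¹)))
          = 1 / tn * (c * (a + b * (u - v))) := by
      intro a b c tn u v h1 h2 h3 h4
      have e : a * u⁻¹ + b / tn * (a / b + u) * (tn * (v⁻¹ - u⁻¹))
          = (a + b * (u - v)) / v := by
        rw [eq_div_iff h4]
        field_simp
        ring
      rw [e]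
      field_simp
    exact key _ _ _ _ _ _ hxn hxni hT1 hTj
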